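/- Fix μ > c, σ > 0, τ > 0 and q ∈ ℝ with q ≤ c. Then F(t, τ, q; μ, σ, c) tends to 0 as t tends to +∞; i.e., an agent whose true quality is at most the link cost is ostracized almost surely. -/

import Mathlib

open Real MeasureTheory Filter Topology

/-- Standard normal density φ(x) = exp(-x²/2)/√(2π). -/
noncomputable def stdPdf (x : ℝ) : ℝ := Real.exp (-(x ^ 2) / 2) / Real.sqrt (2 * Real.pi)

/-- Standard normal CDF Φ(x) = ∫_{-∞}^x φ(u) du. -/
noncomputable def stdCdf (x : ℝ) : ℝ := ∫ u in Set.Iio x, stdPdf u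

/-- Survival probability F(t, τ, q; μ, σ, c): the probability that the agent's
reputation does not hit the cost c before time t, given true quality q. -/
noncomputable def survF (t τ q μ σ c : ℝ) : ℝ :=
  stdCdf (Real.sqrt (t * τ) * (q - c) + (μ - c) / (σ ^ 2 * Real.sqrt (t * τ)))
    - Real.exp (-(2 / σ ^ 2) * (μ - c) * (q - c)) *
      stdCdf (Real.sqrt (t * τ) * (q - c) - (μ - c) / (σ ^ 2 * Real.sqrt (t * τ)))

lemma stdPdf_integrable : Integrable stdPdf := by
  have h : stdPdf = fun x => Real.exp (-(1/2 : ℝ) * x ^ 2) * (1 / Real.sqrt (2 * Real.pi)) := by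
    funext x
    rw [stdPdf, div_eq_mul_one_div]
    have : -(x ^ 2) / 2 = -(1/2 : ℝ) * x ^ 2 := by ring
    rw [this]
  rw [h]
  exact (integrable_exp_neg_mul_sq (by norm_num : (0:ℝ) < 1/2)).mul_const _

lemma stdCdf_continuous : Continuous stdCdf := by
  have h : stdCdf = fun x => (∫ u in Set.Iic (0:ℝ), stdPdf u) + ∫ u in (0:ℝ)..x, stdPdf u := by
    funext x
    rw [← intervalIntegral.integral_Iic_sub_Iic stdPdf_integrable.integrableOn
      stdPdf_integrable.integrableOn, stdCdf, ← MeasureTheory.integral_Iic_eq_integral_Iio]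
    ring
  rw [h]
  exact continuous_const.add (stdPdf_integrable.continuous_primitive 0)

lemma stdCdf_tendsto_atBot : Tendsto stdCdf atBot (𝓝 0) := by
  have h : stdCdf = fun x => ∫ u, (Set.Iio x).indicator stdPdf u := by
    funext x
    rw [stdCdf, MeasureTheory.integral_indicator measurableSet_Iio]
  rw [h]
  have h0 : (0:ℝ) = ∫ u : ℝ, (0:ℝ) := by simp
  rw [h0]
  apply MeasureTheory.tendsto_integral_filter_of_dominated_convergence
    (fun u => |stdPdf u|)
  · filter_upwards with x
    exact (stdPdf_integrable.aestronglyMeasurable).indicator measurableSet_Iio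
  · filter_upwards with x
    filter_upwards with u
    rw [← Real.norm_eq_abs]
    exact norm_indicator_le_norm_self stdPdf u
  · exact stdPdf_integrable.abs
  · filter_upwards with u
    have : ∀ᶠ x in atBot, (0:ℝ) = (Set.Iio x).indicator stdPdf u := by
      filter_upwards [eventually_le_atBot u] with x hx
      exact (Set.indicator_of_notMem (by simpa using hx) _).symm
    exact Tendsto.congr' this tendsto_const_nhds

/-- for μ > c and q ≤ c, F(t, τ, q; μ, σ, c) → 0 as t → ∞. -/
theorem stmt_9 (μ σ c τ q : ℝ) (hμ : μ > c) (hσ : 0 < σ) (hτ : 0 < τ) (hq : q ≤ c) :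
    Tendsto (fun t : ℝ => survF t τ q μ σ c) atTop (𝓝 0) := by
  have hsqrt : Tendsto Real.sqrt atTop atTop := by
    apply tendsto_atTop_atTop_of_monotone (fun a b hab => Real.sqrt_le_sqrt hab)
    intro b
    exact ⟨b ^ 2, by rw [Real.sqrt_sq_eq_abs]; exact le_abs_self b⟩
  have hs : Tendsto (fun t : ℝ => Real.sqrt (t * τ)) atTop atTop :=
    hsqrt.comp (tendsto_id.atTop_mul_const hτ)
  have hd : Tendsto (fun t : ℝ => (μ - c) / (σ ^ 2 * Real.sqrt (t * τ))) atTop (𝓝 0) := by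
    apply Tendsto.div_atTop tendsto_const_nhds
    exact hs.const_mul_atTop (by positivity)
  unfold survF
  rcases eq_or_lt_of_le hq with hq' | hq'
  · have hz : q - c = 0 := by rw [hq', sub_self]
    simp only [hz, mul_zero, zero_mul, add_zero, zero_add, zero_sub, Real.exp_zero, one_mul]
    have h1 : Tendsto (fun t : ℝ =>
        stdCdf ((μ - c) / (σ ^ 2 * Real.sqrt (t * τ)))) atTop (𝓝 (stdCdf 0)) :=
      (stdCdf_continuous.tendsto 0).comp hd
    have h2 : Tendsto (fun t : ℝ =>
        stdCdf (-((μ - c) / (σ ^ 2 * Real.sqrt (t * τ))))) atTop (𝓝 (stdCdf 0)) := by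
      have := (stdCdf_continuous.tendsto 0).comp (by simpa using hd.neg :
        Tendsto (fun t : ℝ => -((μ - c) / (σ ^ 2 * Real.sqrt (t * τ)))) atTop (𝓝 0))
      exact this
    have h3 := h1.sub h2
    rw [sub_self] at h3
    exact h3
  · have hneg : q - c < 0 := sub_neg.mpr hq'
    have ha : Tendsto (fun t : ℝ => Real.sqrt (t * τ) * (q - c) +
        (μ - c) / (σ ^ 2 * Real.sqrt (t * τ))) atTop atBot :=
      (hs.atTop_mul_const_of_neg hneg).atBot_add hd
    have hb : Tendsto (fun t : ℝ => Real.sqrt (t * τ) * (q - c) -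
        (μ - c) / (σ ^ 2 * Real.sqrt (t * τ))) atTop atBot := by
      simpa [sub_eq_add_neg] using (hs.atTop_mul_const_of_neg hneg).atBot_add hd.neg
    have h1 := stdCdf_tendsto_atBot.comp ha
    have h2 := stdCdf_tendsto_atBot.comp hb
    have := h1.sub ((tendsto_const_nhds (x := Real.exp (-(2 / σ ^ 2) * (μ - c) * (q - c)))).mul h2)
    simpa using this
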